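/- Let G be a k-connected graph and J a set of vertices of G with |J| > k such that J induces a complete subgraph, and let J' = N_G(J) \ J satisfy |J'| ≥ k. Then there exists a matching of size k in G in which every edge joins a vertex of J to a vertex of J'. -/

import Mathlib

/-- In a `k`-connected graph `G`, if `J` induces a complete subgraph with `|J| > k` and
`J' = N_G(J) \ J` has at least `k` elements, then there is a matching of size `k` each of
whose edges joins a vertex of `J` to a vertex of `J'`. -/
theorem stmt8 {V : Type*} [Fintype V] (k : ℕ) (hk : 1 ≤ k) (G : SimpleGraph V)
    (hcard : k < Fintype.card V)
    (hconn : ∀ S : Finset V, S.card < k → (G.induce (↑S : Set V)ᶜ).Connected)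
    (J : Finset V) (hclique : G.IsClique ↑J) (hJ : k < J.card)
    (hJ' : k ≤ (({w | ∃ v ∈ J, G.Adj v w} \ ↑J : Set V)).ncard) :
    ∃ f : Fin k → V × V,
      (∀ i, (f i).1 ∈ J ∧ (f i).2 ∈ ({w | ∃ v ∈ J, G.Adj v w} \ ↑J : Set V) ∧
        G.Adj (f i).1 (f i).2) ∧
      (∀ i i', i ≠ i' → (f i).1 ≠ (f i').1 ∧ (f i).1 ≠ (f i').2 ∧
        (f i).2 ≠ (f i').1 ∧ (f i).2 ≠ (f i').2) := by
  classical
  set S' : Set V := {w | ∃ v ∈ J, G.Adj v w} \ ↑J with hS'def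
  set d := J.card - k with hd
  set N : {x // x ∈ J} → Finset V :=
    fun v => Finset.univ.filter (fun w => w ∈ S' ∧ G.Adj v.val w) with hNdef
  have hNmem : ∀ v w, w ∈ N v ↔ w ∈ S' ∧ G.Adj v.val w := by
    intro v w; simp [hNdef]
  set t : {x // x ∈ J} → Finset (V ⊕ Fin d) :=
    fun v => (N v).image Sum.inl ∪ Finset.univ.image Sum.inr with htdef
  -- Hall condition
  have hall : ∀ s : Finset {x // x ∈ J}, s.card ≤ (s.biUnion t).card := by
    intro s
    by_contra hcon
    push_neg at hcon
    have hs0 : 0 < s.card := lt_of_le_of_lt (Nat.zero_le _) hcon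
    obtain ⟨a₀, ha₀⟩ := Finset.card_pos.mp hs0
    have hbU : (s.biUnion N).image Sum.inl ∪ Finset.univ.image Sum.inr ⊆ s.biUnion t := by
      intro x hx
      rcases Finset.mem_union.mp hx with h | h
      · obtain ⟨w, hw, rfl⟩ := Finset.mem_image.mp h
        obtain ⟨v, hv, hw⟩ := Finset.mem_biUnion.mp hw
        exact Finset.mem_biUnion.mpr ⟨v, hv,
          Finset.mem_union_left _ (Finset.mem_image.mpr ⟨w, hw, rfl⟩)⟩
      · exact Finset.mem_biUnion.mpr ⟨a₀, ha₀, Finset.mem_union_right _ h⟩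
    have hinr : (Finset.univ.image (Sum.inr : Fin d → V ⊕ Fin d)).card = d := by
      rw [Finset.card_image_of_injective _ Sum.inr_injective, Finset.card_univ,
        Fintype.card_fin]
    have hdisj : Disjoint ((s.biUnion N).image (Sum.inl : V → V ⊕ Fin d))
        (Finset.univ.image Sum.inr) := by
      rw [Finset.disjoint_left]
      intro x hx hx'
      obtain ⟨w, _, rfl⟩ := Finset.mem_image.mp hx
      obtain ⟨y, _, heq⟩ := Finset.mem_image.mp hx'
      exact absurd heq (by simp)
    have hcard2 : (s.biUnion N).card + d ≤ (s.biUnion t).card := by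
      calc (s.biUnion N).card + d
          = ((s.biUnion N).image Sum.inl).card + (Finset.univ.image Sum.inr).card := by
            rw [Finset.card_image_of_injective _ Sum.inl_injective, hinr]
        _ = ((s.biUnion N).image Sum.inl ∪ Finset.univ.image Sum.inr).card :=
            (Finset.card_union_of_disjoint hdisj).symm
        _ ≤ (s.biUnion t).card := Finset.card_le_card hbU
    have hcon2 : (s.biUnion N).card + d < s.card := lt_of_le_of_lt hcard2 hcon
    -- the cut
    have hsubJ : s.image Subtype.val ⊆ J := by
      intro x hx
      obtain ⟨v, _, rfl⟩ := Finset.mem_image.mp hx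
      exact v.2
    have himg : (s.image Subtype.val).card = s.card :=
      Finset.card_image_of_injective _ Subtype.val_injective
    have hsJ : s.card ≤ J.card := by
      rw [← himg]; exact Finset.card_le_card hsubJ
    set C : Finset V := (J \ s.image Subtype.val) ∪ s.biUnion N with hCdef
    have hCcard : C.card < k := by
      have h1 : (J \ s.image Subtype.val).card = J.card - s.card := by
        rw [Finset.card_sdiff_of_subset hsubJ, himg]
      have h2 : C.card ≤ (J \ s.image Subtype.val).card + (s.biUnion N).card :=
        Finset.card_union_le _ _
      omega
    have hconnC := hconn C hCcard
    -- disjointness of S' from C's "J part" etc.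
    have hS'notJ : ∀ w ∈ S', w ∉ J := fun w hw => by
      intro hwJ; exact hw.2 hwJ
    -- pick a
    obtain ⟨a, ha⟩ := Finset.card_pos.mp hs0
    have haJ : a.val ∈ J := a.2
    have haC : a.val ∉ C := by
      intro h
      rcases Finset.mem_union.mp h with h | h
      · exact (Finset.mem_sdiff.mp h).2 (Finset.mem_image.mpr ⟨a, ha, rfl⟩)
      · obtain ⟨v, _, hv⟩ := Finset.mem_biUnion.mp h
        exact hS'notJ _ ((hNmem v a.val).mp hv).1 haJ
    -- pick b
    have hbex : ∃ b ∈ S', b ∉ C := by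
      by_contra h
      push_neg at h
      have hsub : S' ⊆ ↑C := fun x hx => h x hx
      have := Set.ncard_le_ncard hsub C.finite_toSet
      rw [Set.ncard_coe_finset] at this
      omega
    obtain ⟨b, hbS', hbC⟩ := hbex
    have hbJ : b ∉ J := hS'notJ _ hbS'
    have haMem : a.val ∈ (↑C : Set V)ᶜ := by simpa using haC
    have hbMem : b ∈ (↑C : Set V)ᶜ := by simpa using hbC
    obtain ⟨p⟩ := hconnC.preconnected ⟨a.val, haMem⟩ ⟨b, hbMem⟩
    -- membership in J is preserved along walks avoiding C
    have key : ∀ {x y : ((↑C : Set V)ᶜ : Set V)},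
        (G.induce ((↑C : Set V)ᶜ)).Walk x y → (x : V) ∈ J → (y : V) ∈ J := by
      intro x y p
      induction p with
      | nil => exact id
      | @cons u v w h q ih =>
        intro hu
        apply ih
        have hadj : G.Adj (u : V) (v : V) := h
        by_contra hvJ
        have hvS' : (v : V) ∈ S' := ⟨⟨u.val, hu, hadj⟩, hvJ⟩
        have huC : (u : V) ∉ C := u.2
        have huimg : (u : V) ∈ s.image Subtype.val := by
          by_contra h'
          exact huC (Finset.mem_union_left _ (Finset.mem_sdiff.mpr ⟨hu, h'⟩))
        obtain ⟨u', hu's, hu'eq⟩ := Finset.mem_image.mp huimg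
        have : (v : V) ∈ C := Finset.mem_union_right _
          (Finset.mem_biUnion.mpr ⟨u', hu's,
            (hNmem u' v.val).mpr ⟨hvS', hu'eq ▸ hadj⟩⟩)
        exact v.2 this
    exact hbJ (key p haJ)
  -- apply Hall
  obtain ⟨f, hfinj, hf⟩ := (Finset.all_card_le_biUnion_card_iff_exists_injective t).mp hall
  set T : Finset {x // x ∈ J} := Finset.univ.filter (fun v => (f v).isLeft) with hTdef
  have hTc : (Finset.univ.filter (fun v => ¬ (f v).isLeft = true)).card ≤ d := by
    set Tc := Finset.univ.filter (fun v => ¬ (f v).isLeft = true) with hTcdef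
    have himg : (Tc.image f).card = Tc.card := Finset.card_image_of_injective _ hfinj
    have hsub : Tc.image f ⊆ Finset.univ.image Sum.inr := by
      intro x hx
      obtain ⟨v, hv, rfl⟩ := Finset.mem_image.mp hx
      have hv' : ¬ (f v).isLeft = true := (Finset.mem_filter.mp hv).2
      rcases hfv : f v with w | y
      · rw [hfv] at hv'; simp at hv'
      · exact Finset.mem_image.mpr ⟨y, Finset.mem_univ _, rfl⟩
    have h2 : (Finset.univ.image (Sum.inr : Fin d → V ⊕ Fin d)).card = d := by
      rw [Finset.card_image_of_injective _ Sum.inr_injective, Finset.card_univ,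
        Fintype.card_fin]
    calc Tc.card = (Tc.image f).card := himg.symm
      _ ≤ (Finset.univ.image Sum.inr).card := Finset.card_le_card hsub
      _ = d := h2
  have hTcard : k ≤ T.card := by
    have hsplit := Finset.card_filter_add_card_filter_not
      (s := (Finset.univ : Finset {x // x ∈ J})) (p := fun v => (f v).isLeft = true)
    have hcardι : (Finset.univ : Finset {x // x ∈ J}).card = J.card := by
      rw [Finset.card_univ, Fintype.card_coe]
    simp only [hTdef]
    omega
  obtain ⟨T₀, hT₀sub, hT₀card⟩ := Finset.exists_subset_card_eq hTcard
  set e : ↥T₀ ≃ Fin k := T₀.equivFinOfCardEq hT₀card with hedef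
  -- helper: extract the left value
  have hleft : ∀ v ∈ T₀, ∃ w, f v = Sum.inl w := by
    intro v hv
    have : (f v).isLeft = true := (Finset.mem_filter.mp (hT₀sub hv)).2
    rcases hfv : f v with w | y
    · exact ⟨w, rfl⟩
    · rw [hfv] at this; simp at this
  set F : Fin k → V × V := fun i =>
    ((((e.symm i : ↥T₀) : {x // x ∈ J}) : V),
      Sum.elim id (fun _ => (((e.symm i : ↥T₀) : {x // x ∈ J}) : V)) (f (e.symm i))) with hFdef
  -- key facts about F
  have hFfact : ∀ i : Fin k, (F i).1 ∈ J ∧ (F i).2 ∈ S' ∧ G.Adj (F i).1 (F i).2 := by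
    intro i
    set v : {x // x ∈ J} := ((e.symm i : ↥T₀) : {x // x ∈ J}) with hvdef
    obtain ⟨w, hw⟩ := hleft v (e.symm i).2
    have hF1 : (F i).1 = (v : V) := rfl
    have hF2 : (F i).2 = w := by simp [hFdef, ← hvdef, hw]
    have hmem : Sum.inl w ∈ t v := hw ▸ hf v
    have hwN : w ∈ N v := by
      rcases Finset.mem_union.mp hmem with h | h
      · obtain ⟨w', hw', heq⟩ := Finset.mem_image.mp h
        exact (Sum.inl_injective heq) ▸ hw'
      · obtain ⟨y, _, heq⟩ := Finset.mem_image.mp h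
        exact absurd heq (by simp)
    obtain ⟨hwS', hwadj⟩ := (hNmem v w).mp hwN
    exact ⟨hF1 ▸ v.2, hF2 ▸ hwS', by rw [hF1, hF2]; exact hwadj⟩
  refine ⟨F, fun i => hFfact i, ?_⟩
  intro i i' hii'
  set v : {x // x ∈ J} := ((e.symm i : ↥T₀) : {x // x ∈ J}) with hvdef
  set v' : {x // x ∈ J} := ((e.symm i' : ↥T₀) : {x // x ∈ J}) with hv'def
  have hvv' : v ≠ v' := by
    intro h
    apply hii'
    have : (e.symm i : ↥T₀) = (e.symm i' : ↥T₀) := Subtype.ext h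
    exact e.symm.injective this
  obtain ⟨w, hw⟩ := hleft v (e.symm i).2
  obtain ⟨w', hw'⟩ := hleft v' (e.symm i').2
  have hF1 : (F i).1 = (v : V) := rfl
  have hF1' : (F i').1 = (v' : V) := rfl
  have hF2 : (F i).2 = w := by simp [hFdef, ← hvdef, hw]
  have hF2' : (F i').2 = w' := by simp [hFdef, ← hv'def, hw']
  have hww' : w ≠ w' := by
    intro h
    apply hvv'
    apply hfinj
    rw [hw, hw', h]
  have hSi := (hFfact i).2.1
  have hSi' := (hFfact i').2.1
  have hJi := (hFfact i).1
  have hJi' := (hFfact i').1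
  refine ⟨?_, ?_, ?_, ?_⟩
  · rw [hF1, hF1']
    intro h; exact hvv' (Subtype.ext h)
  · intro h
    exact hSi'.2 (h ▸ hJi)
  · intro h
    exact hSi.2 (h ▸ hJi')
  · rw [hF2, hF2']; exact hww'
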